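/- Let A = {H_1, …, H_m} be a linear hyperplane arrangement in ℝ^d. Then the union over all nonzero subspaces L in the intersection lattice of A of the orthogonal complements L^⊥ equals the union over all closed chambers C of the topological boundary of the dual cone C°. -/

import Mathlib

open scoped RealInnerProductSpace Pointwise Classical
open Set

noncomputable section

abbrev E (d : ℕ) : Type := EuclideanSpace ℝ (Fin d)

variable {d : ℕ}

/-- Positive hull: all finite nonnegative combinations of elements of `A`. -/
def posHull (A : Set (E d)) : Set (E d) :=
  {x | ∃ (n : ℕ) (c : Fin n → ℝ) (v : Fin n → E d),
    (∀ i, 0 ≤ c i) ∧ (∀ i, v i ∈ A) ∧ x = ∑ i, c i • v i}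

/-- Dual (polar) cone. -/
def polarCone (C : Set (E d)) : Set (E d) := {z | ∀ y ∈ C, ⟪z, y⟫ ≤ 0}

/-- A polyhedral cone: finite intersection of linear closed half-spaces. -/
def IsPolyCone (C : Set (E d)) : Prop :=
  ∃ (m : ℕ) (y : Fin m → E d), C = {z | ∀ i, ⟪z, y i⟫ ≤ 0}

/-- A polyhedral set: finite intersection of closed half-spaces. -/
def IsPolyhedron (P : Set (E d)) : Prop :=
  ∃ (m : ℕ) (y : Fin m → E d) (c : Fin m → ℝ), P = {z | ∀ i, ⟪z, y i⟫ ≤ c i}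

/-- Faces of `P`: `P` itself, or intersections with supporting hyperplanes. -/
def IsFaceOf (P F : Set (E d)) : Prop :=
  F = P ∨ ∃ (y : E d) (c : ℝ), (∀ z ∈ P, ⟪y, z⟫ ≤ c) ∧ F = {z | z ∈ P ∧ ⟪y, z⟫ = c}

/-- Dimension of a set: dimension of its affine hull. -/
def sdim (F : Set (E d)) : ℕ := Module.finrank ℝ (affineSpan ℝ F).direction

/-- The `k`-dimensional (nonempty) faces of `P`. -/
def facesOfDim (P : Set (E d)) (k : ℕ) : Set (Set (E d)) :=
  {F | IsFaceOf P F ∧ F.Nonempty ∧ sdim F = k}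

/-- Tangent cone of `P` at a point `f₀`. -/
def tangentConeOf (P : Set (E d)) (f₀ : E d) : Set (E d) :=
  {u | ∃ δ : ℝ, 0 < δ ∧ f₀ + δ • u ∈ P}

/-- Normal cone of `P` at its face `F`: polar of the tangent cone at any
relative interior point of `F`. -/
def normalCone (P F : Set (E d)) : Set (E d) :=
  {z | ∀ f₀ ∈ intrinsicInterior ℝ F, ∀ u ∈ tangentConeOf P f₀, ⟪z, u⟫ ≤ 0}

/-- `y` is a nearest point of `P` to `x`. -/
def IsNearestPt (P : Set (E d)) (x y : E d) : Prop :=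
  y ∈ P ∧ ∀ z ∈ P, dist x y ≤ dist x z

/-- `dim(x,P) = k`: the metric projection of `x` onto `P` lies in the relative
interior of a `k`-dimensional face of `P`. -/
def projDimEq (P : Set (E d)) (x : E d) (k : ℕ) : Prop :=
  ∃ y F, IsNearestPt P x y ∧ IsFaceOf P F ∧ y ∈ intrinsicInterior ℝ F ∧ sdim F = k

def IsHyperplane (H : Set (E d)) : Prop :=
  ∃ (y : E d) (c : ℝ), y ≠ 0 ∧ H = {z | ⟪y, z⟫ = c}

def IsLinearHyperplane (H : Set (E d)) : Prop :=
  ∃ y : E d, y ≠ 0 ∧ H = {z | ⟪y, z⟫ = 0}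

/-- Closed chambers of the complement of the set `S`. -/
def IsChamberOfUnion (S P : Set (E d)) : Prop :=
  ∃ x : E d, x ∉ S ∧ P = closure (connectedComponentIn Sᶜ x)

/-- Closed chambers of the hyperplane arrangement `A`. -/
def IsChamber (A : Finset (Set (E d))) (P : Set (E d)) : Prop :=
  IsChamberOfUnion (⋃ H ∈ A, H) P

/-- Intersection of a finite subcollection of hyperplanes (`⊤` for `∅`). -/
def interSet (B : Finset (Set (E d))) : Set (E d) := ⋂ H ∈ B, H

/-- The unsigned coefficient `a_k` of the characteristic polynomial:
`χ_A(t) = Σ_k (-1)^(d-k) a_k t^k` via Whitney's formula. -/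
def charCoeff (A : Finset (Set (E d))) (k : ℕ) : ℤ :=
  (-1 : ℤ) ^ (d - k) *
    ∑ B ∈ A.powerset,
      if (interSet B).Nonempty ∧ sdim (interSet B) = k then (-1 : ℤ) ^ B.card else 0

section Aux
variable {d : ℕ}

noncomputable def nrm (H : Set (E d)) : E d :=
  if h : IsLinearHyperplane H then h.choose else 0

lemma nrm_ne_zero {H : Set (E d)} (h : IsLinearHyperplane H) : nrm H ≠ 0 := by
  rw [nrm, dif_pos h]; exact h.choose_spec.1

lemma mem_iff_nrm {H : Set (E d)} (h : IsLinearHyperplane H) (z : E d) :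
    z ∈ H ↔ ⟪nrm H, z⟫ = 0 := by
  rw [nrm, dif_pos h]
  conv_lhs => rw [h.choose_spec.2]
  rfl

/-- Open cell of the arrangement containing `w`. -/
def oCell (A : Finset (Set (E d))) (w : E d) : Set (E d) :=
  {z | ∀ H ∈ A, 0 < ⟪nrm H, w⟫ * ⟪nrm H, z⟫}

/-- Closed cell of the arrangement containing `w`. -/
def cCell (A : Finset (Set (E d))) (w : E d) : Set (E d) :=
  {z | ∀ H ∈ A, 0 ≤ ⟪nrm H, w⟫ * ⟪nrm H, z⟫}

lemma oCell_eq (A : Finset (Set (E d))) (w : E d) :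
    oCell A w = ⋂ H ∈ A, {z | 0 < ⟪nrm H, w⟫ * ⟪nrm H, z⟫} := by
  ext z; simp [oCell]

lemma cCell_eq (A : Finset (Set (E d))) (w : E d) :
    cCell A w = ⋂ H ∈ A, {z | 0 ≤ ⟪nrm H, w⟫ * ⟪nrm H, z⟫} := by
  ext z; simp [cCell]

lemma cont_aux (n : E d) (c : ℝ) : Continuous fun z : E d => c * ⟪n, z⟫ :=
  continuous_const.mul (Continuous.inner continuous_const continuous_id)

lemma isOpen_oCell (A : Finset (Set (E d))) (w : E d) : IsOpen (oCell A w) := by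
  rw [oCell_eq]
  exact isOpen_biInter_finset fun H _ => isOpen_lt continuous_const (cont_aux _ _)

lemma isClosed_cCell (A : Finset (Set (E d))) (w : E d) : IsClosed (cCell A w) := by
  rw [cCell_eq]
  exact isClosed_biInter fun H _ => isClosed_le continuous_const (cont_aux _ _)

lemma convex_oCell (A : Finset (Set (E d))) (w : E d) : Convex ℝ (oCell A w) := by
  rw [oCell_eq]
  refine convex_iInter₂ fun H _ => convex_halfSpace_gt ?_ 0
  constructor
  · intro a b; simp [inner_add_right, mul_add]
  · intro c a; simp [inner_smul_right, smul_eq_mul]; ring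

lemma smul_mem_cCell {A : Finset (Set (E d))} {w z : E d} (hz : z ∈ cCell A w)
    {t : ℝ} (ht : 0 ≤ t) : t • z ∈ cCell A w := by
  intro H hH
  have := hz H hH
  rw [inner_smul_right]
  nlinarith

lemma oCell_subset_cCell (A : Finset (Set (E d))) (w : E d) :
    oCell A w ⊆ cCell A w := fun z hz H hH => (hz H hH).le

end Aux
section Aux2
variable {d : ℕ} {A : Finset (Set (E d))}

lemma mem_oCell_self (hA : ∀ H ∈ A, IsLinearHyperplane H) {w : E d}
    (hw : w ∉ ⋃ H ∈ A, H) : w ∈ oCell A w := by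
  intro H hH
  have hne : ⟪nrm H, w⟫ ≠ 0 := by
    intro h0
    exact hw (Set.mem_biUnion hH ((mem_iff_nrm (hA H hH) w).2 h0))
  exact mul_self_pos.2 hne

lemma oCell_disjoint_union (hA : ∀ H ∈ A, IsLinearHyperplane H) (w : E d) :
    oCell A w ⊆ (⋃ H ∈ A, H)ᶜ := by
  intro z hz hmem
  simp only [Set.mem_iUnion] at hmem
  obtain ⟨H, hH, hzH⟩ := hmem
  have := hz H hH
  rw [(mem_iff_nrm (hA H hH) z).1 hzH, mul_zero] at this
  exact lt_irrefl _ this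

lemma connectedComponentIn_eq_oCell (hA : ∀ H ∈ A, IsLinearHyperplane H) {w : E d}
    (hw : w ∉ ⋃ H ∈ A, H) :
    connectedComponentIn (⋃ H ∈ A, (H : Set (E d)))ᶜ w = oCell A w := by
  apply Set.Subset.antisymm
  · intro z hz
    intro H hH
    have hcs : connectedComponentIn (⋃ H ∈ A, (H : Set (E d)))ᶜ w ⊆
        {z | 0 < ⟪nrm H, z⟫} ∪ {z | ⟪nrm H, z⟫ < 0} := by
      intro u hu
      have hu' : u ∉ ⋃ H ∈ A, (H : Set (E d)) :=
        connectedComponentIn_subset _ _ hu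
      have : ⟪nrm H, u⟫ ≠ 0 := by
        intro h0
        exact hu' (Set.mem_biUnion hH ((mem_iff_nrm (hA H hH) u).2 h0))
      rcases this.lt_or_gt with h | h
      · exact Or.inr h
      · exact Or.inl h
    have hdisj : Disjoint {z : E d | 0 < ⟪nrm H, z⟫} {z : E d | ⟪nrm H, z⟫ < 0} := by
      rw [Set.disjoint_left]
      intro u h1 h2
      simp only [Set.mem_setOf_eq] at h1 h2
      exact absurd (h1.trans h2) (lt_irrefl 0)
    have := (isPreconnected_connectedComponentIn).subset_or_subset
      (isOpen_lt continuous_const (Continuous.inner continuous_const continuous_id))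
      (isOpen_lt (Continuous.inner continuous_const continuous_id) continuous_const)
      hdisj hcs
    have hwmem : w ∈ connectedComponentIn (⋃ H ∈ A, (H : Set (E d)))ᶜ w :=
      mem_connectedComponentIn hw
    have hwne : ⟪nrm H, w⟫ ≠ 0 := by
      intro h0
      exact hw (Set.mem_biUnion hH ((mem_iff_nrm (hA H hH) w).2 h0))
    rcases this with h | h
    · have hwpos := h hwmem
      have hzpos := h hz
      exact mul_pos hwpos hzpos
    · have hwneg := h hwmem
      have hzneg := h hz
      exact mul_pos_of_neg_of_neg hwneg hzneg
  · exact (convex_oCell A w).isPreconnected.subset_connectedComponentIn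
      (mem_oCell_self hA hw) (oCell_disjoint_union hA w)

lemma closure_oCell (hA : ∀ H ∈ A, IsLinearHyperplane H) {w : E d}
    (hw : w ∉ ⋃ H ∈ A, H) : closure (oCell A w) = cCell A w := by
  apply Set.Subset.antisymm
  · exact closure_minimal (oCell_subset_cCell A w) (isClosed_cCell A w)
  · intro z hz
    have hseq : Filter.Tendsto (fun k : ℕ => z + (1 / (k + 1) : ℝ) • (w - z))
        Filter.atTop (nhds z) := by
      have h1 : Filter.Tendsto (fun k : ℕ => (1 / (k + 1) : ℝ)) Filter.atTop (nhds 0) :=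
        tendsto_one_div_add_atTop_nhds_zero_nat
      have h2 : Filter.Tendsto (fun k : ℕ => (1 / (k + 1) : ℝ) • (w - z))
          Filter.atTop (nhds ((0 : ℝ) • (w - z))) := h1.smul_const _
      rw [zero_smul] at h2
      simpa using (tendsto_const_nhds.add h2)
    refine mem_closure_of_tendsto hseq (Filter.Eventually.of_forall fun k => ?_)
    intro H hH
    have hε : (0 : ℝ) < 1 / (k + 1) := by positivity
    have hε1 : (1 / ((k : ℝ) + 1)) ≤ 1 := by
      rw [div_le_one (by positivity)]; linarith
    have hzc := hz H hH
    have hwp : (0 : ℝ) < ⟪nrm H, w⟫ * ⟪nrm H, w⟫ := mem_oCell_self hA hw H hH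
    have : ⟪nrm H, z + (1 / (k + 1) : ℝ) • (w - z)⟫
        = (1 - 1 / (k + 1)) * ⟪nrm H, z⟫ + (1 / (k + 1)) * ⟪nrm H, w⟫ := by
      rw [inner_add_right, inner_smul_right, inner_sub_right]; ring
    rw [this]
    have h1 : 0 ≤ ⟪nrm H, w⟫ * ((1 - 1 / (k + 1)) * ⟪nrm H, z⟫) := by
      have : ⟪nrm H, w⟫ * ((1 - 1 / (k + 1)) * ⟪nrm H, z⟫)
          = (1 - 1 / (k + 1)) * (⟪nrm H, w⟫ * ⟪nrm H, z⟫) := by ring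
      rw [this]
      exact mul_nonneg (by linarith) hzc
    nlinarith

lemma isChamber_iff (hA : ∀ H ∈ A, IsLinearHyperplane H) (P : Set (E d)) :
    IsChamber A P ↔ ∃ w, w ∉ ⋃ H ∈ A, H ∧ P = cCell A w := by
  constructor
  · rintro ⟨w, hw, rfl⟩
    exact ⟨w, hw, by rw [connectedComponentIn_eq_oCell hA hw, closure_oCell hA hw]⟩
  · rintro ⟨w, hw, rfl⟩
    exact ⟨w, hw, by rw [connectedComponentIn_eq_oCell hA hw, closure_oCell hA hw]⟩

end Aux2
section Aux3
variable {d : ℕ}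

lemma isClosed_polarCone (C : Set (E d)) : IsClosed (polarCone C) := by
  have : polarCone C = ⋂ y ∈ C, {z : E d | ⟪z, y⟫ ≤ 0} := by
    ext z; simp [polarCone]
  rw [this]
  exact isClosed_biInter fun y _ =>
    isClosed_le (Continuous.inner continuous_id continuous_const) continuous_const

lemma mem_frontier_polar {C : Set (E d)} {x y : E d}
    (hx : x ∈ polarCone C) (hy : y ∈ C) (hy0 : y ≠ 0) (hxy : ⟪x, y⟫ = 0) :
    x ∈ frontier (polarCone C) := by
  rw [frontier, (isClosed_polarCone C).closure_eq]
  refine ⟨hx, fun hint => ?_⟩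
  rw [mem_interior_iff_mem_nhds, Metric.mem_nhds_iff] at hint
  obtain ⟨ε, hε, hball⟩ := hint
  have hyn : (0 : ℝ) < ‖y‖ := norm_pos_iff.2 hy0
  set c : ℝ := ε / (2 * ‖y‖) with hc
  have hcpos : 0 < c := by positivity
  have hmem : x + c • y ∈ polarCone C := by
    apply hball
    rw [Metric.mem_ball, dist_eq_norm]
    have : x + c • y - x = c • y := by abel
    rw [this, norm_smul, Real.norm_eq_abs, abs_of_pos hcpos, hc]
    rw [div_mul_eq_mul_div, mul_comm]
    rw [div_lt_iff₀ (by positivity)]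
    nlinarith
  have := hmem y hy
  rw [inner_add_left, hxy, real_inner_smul_left, zero_add] at this
  have h2 : 0 < c * ⟪y, y⟫ := by
    rw [real_inner_self_eq_norm_sq]
    positivity
  linarith

lemma frontier_polar_subset {C : Set (E d)} (hC : IsClosed C)
    (hcone : ∀ z ∈ C, ∀ t : ℝ, 0 ≤ t → t • z ∈ C) {x : E d}
    (hx : x ∈ frontier (polarCone C)) :
    x ∈ polarCone C ∧ ∃ y ∈ C, y ≠ 0 ∧ ⟪x, y⟫ = 0 := by
  rw [frontier, (isClosed_polarCone C).closure_eq] at hx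
  obtain ⟨hxp, hxint⟩ := hx
  refine ⟨hxp, ?_⟩
  have key : ∀ k : ℕ, ∃ u, u ∈ C ∧ ‖u‖ = 1 ∧ -(1 / (k + 1) : ℝ) < ⟪x, u⟫ := by
    intro k
    have hε : (0 : ℝ) < 1 / (k + 1) := by positivity
    have hnb : ¬ Metric.ball x (1 / (k + 1)) ⊆ polarCone C := by
      intro hsub
      exact hxint (mem_interior_iff_mem_nhds.2 (Filter.mem_of_superset
        (Metric.ball_mem_nhds x hε) hsub))
    rw [Set.not_subset] at hnb
    obtain ⟨x', hx'b, hx'n⟩ := hnb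
    rw [polarCone, Set.mem_setOf_eq] at hx'n
    push_neg at hx'n
    obtain ⟨y', hy'C, hy'⟩ := hx'n
    have hy'0 : y' ≠ 0 := by
      intro h; rw [h, inner_zero_right] at hy'; exact lt_irrefl _ hy'
    have hy'n : (0 : ℝ) < ‖y'‖ := norm_pos_iff.2 hy'0
    refine ⟨‖y'‖⁻¹ • y', hcone y' hy'C _ (by positivity), ?_, ?_⟩
    · rw [norm_smul, Real.norm_eq_abs, abs_of_pos (by positivity)]
      field_simp
    · have h1 : 0 < ⟪x', ‖y'‖⁻¹ • y'⟫ := by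
        rw [real_inner_smul_right]
        positivity
      have h2 : |⟪x - x', ‖y'‖⁻¹ • y'⟫| ≤ ‖x - x'‖ := by
        have := abs_real_inner_le_norm (x - x') (‖y'‖⁻¹ • y')
        have hnorm1 : ‖‖y'‖⁻¹ • y'‖ = 1 := by
          rw [norm_smul, Real.norm_eq_abs, abs_of_pos (by positivity)]
          field_simp
        rw [hnorm1, mul_one] at this
        exact this
      have h3 : ‖x - x'‖ < 1 / (k + 1) := by
        rw [Metric.mem_ball, dist_comm, dist_eq_norm] at hx'b
        exact hx'b
      have h4 : ⟪x, ‖y'‖⁻¹ • y'⟫ = ⟪x', ‖y'‖⁻¹ • y'⟫ + ⟪x - x', ‖y'‖⁻¹ • y'⟫ := by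
        rw [← inner_add_left]
        congr 1
        abel
      rw [h4]
      have := neg_abs_le ⟪x - x', ‖y'‖⁻¹ • y'⟫
      linarith
  choose u huC hun hux using key
  obtain ⟨y, hy, φ, hφ, hlim⟩ := (isCompact_sphere (0 : E d) 1).tendsto_subseq
    (fun k => by rw [mem_sphere_zero_iff_norm]; exact hun k)
  have hyC : y ∈ C := hC.mem_of_tendsto hlim (Filter.Eventually.of_forall fun k => huC _)
  have hy0 : y ≠ 0 := by
    rw [mem_sphere_zero_iff_norm] at hy
    intro h; rw [h, norm_zero] at hy; norm_num at hy
  refine ⟨y, hyC, hy0, le_antisymm (hxp y hyC) ?_⟩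
  have hlim2 : Filter.Tendsto (fun k => ⟪x, u (φ k)⟫ + 1 / (φ k + 1))
      Filter.atTop (nhds ⟪x, y⟫) := by
    have ht1 : Filter.Tendsto (fun k => ⟪x, u (φ k)⟫) Filter.atTop (nhds ⟪x, y⟫) :=
      Filter.Tendsto.inner tendsto_const_nhds hlim
    have ht2 : Filter.Tendsto (fun k : ℕ => (1 / ((φ k : ℝ) + 1))) Filter.atTop (nhds 0) := by
      apply squeeze_zero (fun k => by positivity)
        (fun k => ?_) tendsto_one_div_add_atTop_nhds_zero_nat
      apply div_le_div_of_nonneg_left (by norm_num) (by positivity)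
      have h5 : (k:ℕ) ≤ φ k := hφ.le_apply
      have h6 : (k:ℝ) ≤ (φ k : ℝ) := by exact_mod_cast h5
      linarith
    simpa using ht1.add ht2
  refine ge_of_tendsto hlim2 (Filter.Eventually.of_forall fun k => ?_)
  have := hux (φ k)
  linarith

end Aux3
section Aux4
variable {d : ℕ}

lemma isClosed_hyp {H : Set (E d)} (h : IsLinearHyperplane H) : IsClosed H := by
  have : H = (fun z : E d => ⟪nrm H, z⟫) ⁻¹' {0} := by
    ext z; simp [mem_iff_nrm h]
  rw [this]
  exact IsClosed.preimage (Continuous.inner continuous_const continuous_id) isClosed_singleton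

lemma dense_compl_hyp {H : Set (E d)} (h : IsLinearHyperplane H) : Dense Hᶜ := by
  rw [← interior_eq_empty_iff_dense_compl]
  by_contra hne
  obtain ⟨z, hz⟩ := Set.nonempty_iff_ne_empty.2 hne
  rw [mem_interior_iff_mem_nhds, Metric.mem_nhds_iff] at hz
  obtain ⟨ε, hε, hball⟩ := hz
  have hn0 : nrm H ≠ 0 := nrm_ne_zero h
  have hnn : (0:ℝ) < ‖nrm H‖ := norm_pos_iff.2 hn0
  set c : ℝ := ε / (2 * ‖nrm H‖) with hc
  have hz0 : ⟪nrm H, z⟫ = 0 := (mem_iff_nrm h z).1 (hball (Metric.mem_ball_self hε))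
  have hmem : z + c • nrm H ∈ H := by
    apply hball
    rw [Metric.mem_ball, dist_eq_norm]
    have : z + c • nrm H - z = c • nrm H := by abel
    rw [this, norm_smul, Real.norm_eq_abs, abs_of_pos (by positivity), hc]
    rw [div_mul_eq_mul_div, mul_comm, div_lt_iff₀ (by positivity)]
    nlinarith
  have := (mem_iff_nrm h _).1 hmem
  rw [inner_add_right, hz0, real_inner_smul_right, real_inner_self_eq_norm_sq] at this
  have hcpos : (0:ℝ) < c * ‖nrm H‖ ^ 2 := by positivity
  linarith

lemma dense_compl_union (A : Finset (Set (E d))) (hA : ∀ H ∈ A, IsLinearHyperplane H) :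
    Dense ((⋃ H ∈ A, H : Set (E d))ᶜ) := by
  rw [Set.compl_iUnion₂]
  classical
  induction A using Finset.induction with
  | empty => simp [dense_univ]
  | @insert a s ha ih =>
    rw [Finset.set_biInter_insert]
    have hd1 : Dense (aᶜ : Set (E d)) := dense_compl_hyp (hA a (Finset.mem_insert_self a s))
    have hd2 : Dense (⋂ H ∈ s, (Hᶜ : Set (E d))) :=
      ih fun H hH => hA H (Finset.mem_insert_of_mem hH)
    exact Dense.inter_of_isOpen_left hd1 hd2 (isClosed_hyp (hA a (Finset.mem_insert_self a s))).isOpen_compl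

lemma avoid_lemma (M : Submodule ℝ (E d)) (hM : M ≠ ⊥) (B : Finset (Set (E d)))
    (hB : ∀ H ∈ B, IsLinearHyperplane H ∧ ¬ (M : Set (E d)) ⊆ H) :
    ∃ v, v ∈ M ∧ v ≠ 0 ∧ ∀ H ∈ B, v ∉ H := by
  classical
  induction B using Finset.induction with
  | empty =>
    obtain ⟨v, hv, hv0⟩ := (Submodule.ne_bot_iff M).1 hM
    exact ⟨v, hv, hv0, by simp⟩
  | @insert a s ha ih =>
    obtain ⟨v, hvM, hv0, hvs⟩ := ih fun H hH => hB H (Finset.mem_insert_of_mem hH)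
    obtain ⟨hlin, hnsub⟩ := hB a (Finset.mem_insert_self a s)
    by_cases hva : v ∉ a
    · exact ⟨v, hvM, hv0, fun H hH => by
        rcases Finset.mem_insert.1 hH with rfl | hH
        · exact hva
        · exact hvs H hH⟩
    push_neg at hva
    rw [Set.not_subset] at hnsub
    obtain ⟨p, hpM, hpa⟩ := hnsub
    have hpa' : ⟪nrm a, p⟫ ≠ 0 := fun h0 => hpa ((mem_iff_nrm hlin p).2 h0)
    have hva' : ⟪nrm a, v⟫ = 0 := (mem_iff_nrm hlin v).1 hva
    -- choose t avoiding bad values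
    set bad : Finset ℝ := insert 0 (s.image fun H => -⟪nrm H, v⟫ / ⟪nrm H, p⟫) with hbad
    obtain ⟨t, ht⟩ := Finset.exists_notMem bad
    have ht0 : t ≠ 0 := fun h => ht (by rw [h, hbad]; exact Finset.mem_insert_self _ _)
    refine ⟨v + t • p, M.add_mem hvM (M.smul_mem t hpM), ?_, ?_⟩
    · intro h0
      have : ⟪nrm a, v + t • p⟫ = 0 := by rw [h0, inner_zero_right]
      rw [inner_add_right, hva', real_inner_smul_right, zero_add] at this
      rcases mul_eq_zero.1 this with h | h
      · exact ht0 h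
      · exact hpa' h
    · intro H hH
      rcases Finset.mem_insert.1 hH with rfl | hHs
      · intro hmem
        have : ⟪nrm H, v + t • p⟫ = 0 := (mem_iff_nrm hlin _).1 hmem
        rw [inner_add_right, hva', real_inner_smul_right, zero_add] at this
        rcases mul_eq_zero.1 this with h | h
        · exact ht0 h
        · exact hpa' h
      · intro hmem
        have hHlin := (hB H (Finset.mem_insert_of_mem hHs)).1
        have hvH : ⟪nrm H, v⟫ ≠ 0 := fun h0 => hvs H hHs ((mem_iff_nrm hHlin v).2 h0)
        have heq : ⟪nrm H, v⟫ + t * ⟪nrm H, p⟫ = 0 := by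
          have := (mem_iff_nrm hHlin _).1 hmem
          rwa [inner_add_right, real_inner_smul_right] at this
        by_cases hp : ⟪nrm H, p⟫ = 0
        · rw [hp, mul_zero, add_zero] at heq; exact hvH heq
        · apply ht
          rw [hbad]
          apply Finset.mem_insert_of_mem
          refine Finset.mem_image.2 ⟨H, hHs, ?_⟩
          rw [div_eq_iff hp]
          linarith

noncomputable def Msub (B : Finset (Set (E d))) : Submodule ℝ (E d) :=
  ⨅ H ∈ B, LinearMap.ker ((innerSL ℝ (nrm H) : E d →L[ℝ] ℝ) : E d →ₗ[ℝ] ℝ)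

lemma coe_Msub (B : Finset (Set (E d))) (hB : ∀ H ∈ B, IsLinearHyperplane H) :
    (Msub B : Set (E d)) = interSet B := by
  ext z
  simp only [Msub, interSet, SetLike.mem_coe, Submodule.mem_iInf, Set.mem_iInter]
  apply forall_congr'
  intro H
  apply forall_congr'
  intro hH
  rw [LinearMap.mem_ker, mem_iff_nrm (hB H hH) z]
  simp

lemma span_interSet (B : Finset (Set (E d))) (hB : ∀ H ∈ B, IsLinearHyperplane H) :
    Submodule.span ℝ (interSet B) = Msub B := by
  rw [← coe_Msub B hB, Submodule.span_eq]

lemma orth_span_nrm (B : Finset (Set (E d))) :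
    (Submodule.span ℝ (nrm '' (B : Set (Set (E d)))))ᗮ = Msub B := by
  ext z
  rw [Submodule.mem_orthogonal]
  constructor
  · intro hz
    simp only [Msub, Submodule.mem_iInf]
    intro H hH
    rw [LinearMap.mem_ker]
    have : nrm H ∈ Submodule.span ℝ (nrm '' (B : Set (Set (E d)))) :=
      Submodule.subset_span (Set.mem_image_of_mem _ hH)
    simpa using hz _ this
  · intro hz u hu
    induction hu using Submodule.span_induction with
    | mem u hu =>
      obtain ⟨H, hH, rfl⟩ := hu
      simp only [Msub, Submodule.mem_iInf] at hz
      have := hz H hH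
      rw [LinearMap.mem_ker] at this
      simpa using this
    | zero => exact inner_zero_left z
    | add u v _ _ hu hv => rw [inner_add_left, hu, hv, add_zero]
    | smul c u _ hu => rw [real_inner_smul_left, hu, mul_zero]

lemma Msub_orth (B : Finset (Set (E d))) :
    (Msub B)ᗮ = Submodule.span ℝ (nrm '' (B : Set (Set (E d)))) := by
  rw [← orth_span_nrm B, Submodule.orthogonal_orthogonal]

end Aux4
section Aux5
variable {d : ℕ}

set_option maxHeartbeats 1000000 in
lemma covering (A' : Finset (Set (E d))) (hA' : ∀ H ∈ A', IsLinearHyperplane H)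
    (x : E d) (hx : x ∈ Submodule.span ℝ (nrm '' (A' : Set (Set (E d))))) :
    ∃ w, (w ∉ ⋃ H ∈ A', H) ∧ ∀ z ∈ cCell A' w, ⟪x, z⟫ ≤ 0 := by
  classical
  rcases Finset.eq_empty_or_nonempty A' with rfl | hAne
  · refine ⟨0, by simp, fun z _ => ?_⟩
    have hx0 : x = 0 := by
      simpa [Submodule.mem_bot] using hx
    rw [hx0, inner_zero_left]
  set V := Submodule.span ℝ (nrm '' (A' : Set (Set (E d)))) with hV
  set K : Set (E d) := {y | y ∈ V ∧ ∀ H ∈ A', |⟪nrm H, y⟫| ≤ 1} with hKdef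
  have hKclosed : IsClosed K := by
    have : K = (V : Set (E d)) ∩ ⋂ H ∈ A', {y | |⟪nrm H, y⟫| ≤ 1} := by
      ext y; simp [hKdef]
    rw [this]
    exact (Submodule.closed_of_finiteDimensional V).inter
      (isClosed_biInter fun H _ =>
        isClosed_le (Continuous.inner continuous_const continuous_id).abs continuous_const)
  -- boundedness of K
  set g : E d → ℝ := fun u => ∑ H ∈ A', ⟪nrm H, u⟫ ^ 2 with hg
  have hgcont : Continuous g := by
    apply continuous_finset_sum
    intro H _
    exact (Continuous.inner continuous_const continuous_id).pow 2
  have hS0 : IsCompact (Metric.sphere (0 : E d) 1 ∩ (V : Set (E d))) :=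
    (isCompact_sphere 0 1).inter_right (Submodule.closed_of_finiteDimensional V)
  have hS0ne : (Metric.sphere (0 : E d) 1 ∩ (V : Set (E d))).Nonempty := by
    obtain ⟨H₀, hH₀⟩ := hAne
    have hn : nrm H₀ ∈ V := Submodule.subset_span (Set.mem_image_of_mem _ hH₀)
    have hn0 : nrm H₀ ≠ 0 := nrm_ne_zero (hA' H₀ hH₀)
    have hnn : (0:ℝ) < ‖nrm H₀‖ := norm_pos_iff.2 hn0
    refine ⟨‖nrm H₀‖⁻¹ • nrm H₀, ?_, V.smul_mem _ hn⟩
    rw [mem_sphere_zero_iff_norm, norm_smul, Real.norm_eq_abs, abs_of_pos (by positivity)]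
    field_simp
  obtain ⟨u₀, hu₀S, hu₀min⟩ := hS0.exists_isMinOn hS0ne hgcont.continuousOn
  have hμpos : 0 < g u₀ := by
    have hge : (0:ℝ) ≤ g u₀ := Finset.sum_nonneg fun H _ => sq_nonneg _
    rcases lt_or_eq_of_le hge with h | h
    · exact h
    · exfalso
      have hall : ∀ H ∈ A', ⟪nrm H, u₀⟫ = 0 := by
        intro H hH
        have := (Finset.sum_eq_zero_iff_of_nonneg (fun H _ => sq_nonneg _)).1 h.symm H hH
        exact pow_eq_zero_iff (by norm_num) |>.1 this
      have hu₀orth : u₀ ∈ Vᗮ := by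
        rw [hV, orth_span_nrm]
        simp only [Msub, Submodule.mem_iInf]
        intro H hH
        rw [LinearMap.mem_ker]
        simpa using hall H hH
      have hu₀V : u₀ ∈ V := hu₀S.2
      have h0 : u₀ = 0 :=
        Submodule.disjoint_def.1 (Submodule.orthogonal_disjoint V) u₀ hu₀V hu₀orth
      have h1 := hu₀S.1
      rw [mem_sphere_zero_iff_norm, h0, norm_zero] at h1
      norm_num at h1
  set μ := g u₀ with hμ
  have hKbdd : Bornology.IsBounded K := by
    rw [isBounded_iff_forall_norm_le]
    refine ⟨max 1 ((A'.card : ℝ) / μ), fun y hy => ?_⟩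
    by_cases hy0 : y = 0
    · rw [hy0, norm_zero]; exact le_trans zero_le_one (le_max_left _ _)
    have hyn : (0:ℝ) < ‖y‖ := norm_pos_iff.2 hy0
    have hmem : ‖y‖⁻¹ • y ∈ Metric.sphere (0 : E d) 1 ∩ (V : Set (E d)) := by
      constructor
      · rw [mem_sphere_zero_iff_norm, norm_smul, Real.norm_eq_abs, abs_of_pos (by positivity)]
        field_simp
      · exact V.smul_mem _ hy.1
    have hμle : μ ≤ g (‖y‖⁻¹ • y) := hu₀min hmem
    have hgs : g (‖y‖⁻¹ • y) = ‖y‖⁻¹ ^ 2 * g y := by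
      rw [hg]
      simp only [inner_smul_right]
      rw [Finset.mul_sum]
      apply Finset.sum_congr rfl
      intro H _
      ring
    have hgcard : g y ≤ (A'.card : ℝ) := by
      rw [hg]
      calc ∑ H ∈ A', ⟪nrm H, y⟫ ^ 2 ≤ ∑ H ∈ A', 1 := by
            apply Finset.sum_le_sum
            intro H hH
            have := hy.2 H hH
            nlinarith [this, abs_nonneg ⟪nrm H, y⟫, sq_abs ⟪nrm H, y⟫]
        _ = (A'.card : ℝ) := by simp
    have hkey : μ * ‖y‖ ^ 2 ≤ (A'.card : ℝ) := by
      have h1 : μ * ‖y‖ ^ 2 ≤ (‖y‖⁻¹ ^ 2 * g y) * ‖y‖ ^ 2 := by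
        rw [hgs] at hμle
        nlinarith [sq_nonneg ‖y‖]
      have h2 : (‖y‖⁻¹ ^ 2 * g y) * ‖y‖ ^ 2 = g y := by
        field_simp
      linarith [h1, h2 ▸ h1, hgcard]
    rcases le_total ‖y‖ 1 with h | h
    · exact le_trans h (le_max_left _ _)
    · refine le_trans ?_ (le_max_right _ _)
      rw [le_div_iff₀ hμpos]
      nlinarith
  have hKcompact : IsCompact K := Metric.isCompact_of_isClosed_isBounded hKclosed hKbdd
  have hKne : K.Nonempty := ⟨0, V.zero_mem, fun H _ => by simp⟩
  obtain ⟨v, hvK, hvmax⟩ := hKcompact.exists_isMaxOn hKne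
    (Continuous.inner continuous_const continuous_id).continuousOn (f := fun y => ⟪x, y⟫)
  set T := A'.filter (fun H => |⟪nrm H, v⟫| = 1) with hT
  set Q : Set (E d) :=
    {q | ∃ lam : Set (E d) → ℝ, (∀ H, 0 ≤ lam H) ∧
      q = ∑ H ∈ T, lam H • (⟪nrm H, v⟫ • nrm H)} with hQ
  have hQconv : Convex ℝ Q := by
    rintro q1 ⟨l1, hl1, rfl⟩ q2 ⟨l2, hl2, rfl⟩ a b ha hb hab
    refine ⟨fun H => a * l1 H + b * l2 H,
      fun H => add_nonneg (mul_nonneg ha (hl1 H)) (mul_nonneg hb (hl2 H)), ?_⟩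
    rw [Finset.smul_sum, Finset.smul_sum, ← Finset.sum_add_distrib]
    apply Finset.sum_congr rfl
    intro H _
    module
  have h0Q : (0 : E d) ∈ Q := ⟨fun _ => 0, fun _ => le_refl 0, by simp⟩
  have hxQ : x ∈ closure Q := by
    by_contra hxQ
    obtain ⟨f, u, hfQ, hfx⟩ :=
      geometric_hahn_banach_closed_point hQconv.closure isClosed_closure hxQ
    set w₀ := (InnerProductSpace.toDual ℝ (E d)).symm f with hw₀def
    have hw₀ : ∀ z : E d, ⟪w₀, z⟫ = f z := fun z => InnerProductSpace.toDual_symm_apply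
    have hupos : 0 < u := by
      have := hfQ 0 (subset_closure h0Q)
      rwa [map_zero] at this
    have hfxpos : 0 < f x := lt_trans hupos hfx
    have hTineq : ∀ H ∈ T, ⟪nrm H, v⟫ * ⟪nrm H, w₀⟫ ≤ 0 := by
      intro H hH
      by_contra hpos
      push_neg at hpos
      have hcomm : ⟪w₀, nrm H⟫ = ⟪nrm H, w₀⟫ := real_inner_comm _ _
      have hc : 0 < f (⟪nrm H, v⟫ • nrm H) := by
        rw [← hw₀, real_inner_smul_right, hcomm]
        exact hpos
      set t := (u + 1) / f (⟪nrm H, v⟫ • nrm H) with htdef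
      have ht : 0 ≤ t := by positivity
      have hmemQ : t • (⟪nrm H, v⟫ • nrm H) ∈ Q := by
        refine ⟨fun H' => if H' = H then t else 0,
          fun H' => by by_cases hH' : H' = H <;> simp [hH', ht], ?_⟩
        rw [Finset.sum_eq_single H]
        · simp
        · intro b _ hb; simp [hb]
        · intro h; exact absurd hH h
      have := hfQ _ (subset_closure hmemQ)
      rw [map_smul, smul_eq_mul, htdef, div_mul_cancel₀ _ (ne_of_gt hc)] at this
      linarith
    set u' := (V.orthogonalProjectionOnto w₀ : E d) with hu'def
    have hu'V : u' ∈ V := Submodule.coe_mem _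
    have hdiff : w₀ - u' ∈ Vᗮ := Submodule.sub_starProjection_mem_orthogonal (K := V) w₀
    have hu'1 : ∀ H ∈ A', ⟪nrm H, u'⟫ = ⟪nrm H, w₀⟫ := by
      intro H hH
      have hn : nrm H ∈ V := Submodule.subset_span (Set.mem_image_of_mem _ hH)
      have := (Submodule.mem_orthogonal V _).1 hdiff (nrm H) hn
      rw [inner_sub_right] at this
      linarith
    have hu'x : 0 < ⟪x, u'⟫ := by
      have h1 := (Submodule.mem_orthogonal V _).1 hdiff x hx
      rw [inner_sub_right] at h1
      have h2 : ⟪x, u'⟫ = ⟪x, w₀⟫ := by linarith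
      rw [h2, real_inner_comm, hw₀]
      exact hfxpos
    have hev : ∀ᶠ δ in nhdsWithin (0:ℝ) (Set.Ioi 0),
        (∀ H ∈ A', |⟪nrm H, v + δ • u'⟫| ≤ 1) ∧ 0 < δ := by
      refine Filter.Eventually.and ?_ (eventually_mem_nhdsWithin)
      rw [Finset.eventually_all]
      intro H hH
      by_cases hHT : H ∈ T
      · -- tight constraint
        have hs1 : |⟪nrm H, v⟫| = 1 := (Finset.mem_filter.1 hHT).2
        have hsc : ⟪nrm H, v⟫ * ⟪nrm H, w₀⟫ ≤ 0 := hTineq H hHT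
        set s := ⟪nrm H, v⟫
        set c := ⟪nrm H, w₀⟫
        have hcases : s = 1 ∨ s = -1 := abs_eq (by norm_num : (0:ℝ) ≤ 1) |>.1 hs1
        have hscm : s * c = -|c| := by
          rcases hcases with h | h
          · rw [h, one_mul] at hsc ⊢
            rw [abs_of_nonpos hsc]; ring
          · rw [h, neg_one_mul] at hsc ⊢
            have hc0 : 0 ≤ c := by linarith
            rw [abs_of_nonneg hc0]
        have hfil : Set.Ioc (0:ℝ) (1 / (|c| + 1)) ∈ nhdsWithin (0:ℝ) (Set.Ioi 0) := by
          exact Ioc_mem_nhdsGT_of_mem ⟨le_refl 0, by positivity⟩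
        filter_upwards [hfil] with δ hδ
        obtain ⟨hδ0, hδ1⟩ := hδ
        have hδc : δ * |c| ≤ 2 := by
          have h1 : δ * |c| ≤ (1 / (|c| + 1)) * |c| :=
            mul_le_mul_of_nonneg_right hδ1 (abs_nonneg c)
          have h2 : (1 / (|c| + 1)) * |c| ≤ 1 := by
            rw [div_mul_eq_mul_div, one_mul, div_le_one (by positivity)]
            linarith
          linarith
        have hval : ⟪nrm H, v + δ • u'⟫ = s + δ * c := by
          rw [inner_add_right, inner_smul_right, hu'1 H hH]
        rw [hval]
        have hsq : (s + δ * c) ^ 2 = (1 - δ * |c|) ^ 2 := by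
          have hs2 : s ^ 2 = 1 := by
            rw [← sq_abs, hs1]; norm_num
          have hc2 : c ^ 2 = |c| ^ 2 := (sq_abs c).symm
          linear_combination hs2 + 2 * δ * hscm + δ ^ 2 * hc2
        rw [← sq_le_one_iff_abs_le_one, hsq]
        nlinarith [hδc, mul_nonneg hδ0.le (abs_nonneg c)]
      · -- slack constraint
        have hHlt : |⟪nrm H, v⟫| < 1 := by
          rcases lt_or_eq_of_le (hvK.2 H hH) with h | h
          · exact h
          · exact absurd (Finset.mem_filter.2 ⟨hH, h⟩) hHT
        have hcont : Filter.Tendsto (fun δ : ℝ => |⟪nrm H, v + δ • u'⟫|)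
            (nhdsWithin (0:ℝ) (Set.Ioi 0)) (nhds |⟪nrm H, v⟫|) := by
          have hc : Continuous fun δ : ℝ => |⟪nrm H, v + δ • u'⟫| := by
            apply Continuous.abs
            exact Continuous.inner continuous_const
              (continuous_const.add (continuous_id.smul continuous_const))
          have := hc.tendsto 0
          simp only [zero_smul, add_zero] at this
          exact this.mono_left nhdsWithin_le_nhds
        filter_upwards [hcont.eventually_lt_const hHlt] with δ hδ
        exact hδ.le
    haveI : (nhdsWithin (0:ℝ) (Set.Ioi 0)).NeBot := nhdsGT_neBot 0
    obtain ⟨δ, hδall, hδpos⟩ := hev.exists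
    have hy'K : v + δ • u' ∈ K :=
      ⟨V.add_mem hvK.1 (V.smul_mem _ hu'V), hδall⟩
    have := hvmax hy'K
    simp only [Set.mem_setOf_eq] at this
    rw [inner_add_right, inner_smul_right] at this
    nlinarith
  -- Step B
  set U : Set (E d) := {y | ∀ H ∈ T, ⟪nrm H, v⟫ * ⟪nrm H, y⟫ < 0} with hU
  have hUopen : IsOpen U := by
    have : U = ⋂ H ∈ T, {y : E d | ⟪nrm H, v⟫ * ⟪nrm H, y⟫ < 0} := by
      ext y; simp [hU]
    rw [this]
    exact isOpen_biInter_finset fun H _ => isOpen_lt (cont_aux _ _) continuous_const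
  have hUne : U.Nonempty := by
    refine ⟨-v, fun H hH => ?_⟩
    have hs1 : |⟪nrm H, v⟫| = 1 := (Finset.mem_filter.1 hH).2
    rw [inner_neg_right]
    have : ⟪nrm H, v⟫ ^ 2 = 1 := by rw [← sq_abs, hs1]; norm_num
    nlinarith
  obtain ⟨w, hwU, hwD⟩ :=
    (dense_compl_union A' hA').inter_open_nonempty U hUopen hUne
  refine ⟨w, hwD, fun z hz => ?_⟩
  have hTz : ∀ H ∈ T, ⟪nrm H, v⟫ * ⟪nrm H, z⟫ ≤ 0 := by
    intro H hH
    have h1 : ⟪nrm H, v⟫ * ⟪nrm H, w⟫ < 0 := hwU H hH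
    have h2 : 0 ≤ ⟪nrm H, w⟫ * ⟪nrm H, z⟫ := hz H (Finset.filter_subset _ A' hH)
    rcases mul_neg_iff.1 h1 with ⟨hs, ha⟩ | ⟨hs, ha⟩
    · have hb : ⟪nrm H, z⟫ ≤ 0 := by
        by_contra hb
        push_neg at hb
        have := mul_neg_of_neg_of_pos ha hb
        linarith
      exact mul_nonpos_of_nonneg_of_nonpos hs.le hb
    · have hb : 0 ≤ ⟪nrm H, z⟫ := by
        by_contra hb
        push_neg at hb
        have := mul_neg_of_pos_of_neg ha hb
        linarith
      exact mul_nonpos_of_nonpos_of_nonneg hs.le hb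
  have hQz : ∀ q ∈ Q, ⟪q, z⟫ ≤ 0 := by
    rintro q ⟨lam, hlam, rfl⟩
    rw [sum_inner]
    apply Finset.sum_nonpos
    intro H hH
    rw [real_inner_smul_left, real_inner_smul_left]
    exact mul_nonpos_of_nonneg_of_nonpos (hlam H)
      (mul_nonpos_iff.2 (by
        rcases mul_nonpos_iff.1 (hTz H hH) with h | h
        · exact Or.inl h
        · exact Or.inr h))
  have hcl : closure Q ⊆ {q : E d | ⟪q, z⟫ ≤ 0} :=
    closure_minimal hQz (isClosed_le (Continuous.inner continuous_id continuous_const)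
      continuous_const)
  exact hcl hxQ

end Aux5
set_option maxHeartbeats 1000000 in
/-- the union of orthogonal complements of nonzero members of the
intersection lattice equals the union of boundaries of dual cones of chambers. -/
theorem stmt3 {d : ℕ} (A : Finset (Set (E d)))
    (hA : ∀ H ∈ A, IsLinearHyperplane H) :
    {x : E d | ∃ B ∈ A.powerset, interSet B ≠ ({0} : Set (E d)) ∧
        x ∈ ((Submodule.span ℝ (interSet B))ᗮ : Submodule ℝ (E d))} =
    {x : E d | ∃ P, IsChamber A P ∧ x ∈ frontier (polarCone P)} := by
  classical
  haveI : (nhdsWithin (0:ℝ) (Set.Ioi 0)).NeBot := nhdsGT_neBot 0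
  apply Set.Subset.antisymm
  · -- LHS ⊆ RHS
    rintro x ⟨B, hBpow, hBne, hxperp⟩
    have hBsub : B ⊆ A := Finset.mem_powerset.1 hBpow
    have hB : ∀ H ∈ B, IsLinearHyperplane H := fun H hH => hA H (hBsub hH)
    have hML : ((Msub B : Submodule ℝ (E d)) : Set (E d)) = interSet B := coe_Msub B hB
    have hMbot : Msub B ≠ ⊥ := by
      intro h
      apply hBne
      rw [← hML, h, Submodule.bot_coe]
    set badB := A.filter (fun H => ¬ interSet B ⊆ H) with hbadB
    obtain ⟨v, hvM, hv0, hvavoid⟩ := avoid_lemma (Msub B) hMbot badB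
      (fun H hH => ⟨hA H (Finset.mem_filter.1 hH).1, by
        rw [hML]; exact (Finset.mem_filter.1 hH).2⟩)
    have hvL : v ∈ interSet B := by rw [← hML]; exact hvM
    have hvH : ∀ H ∈ A, v ∈ H → interSet B ⊆ H := by
      intro H hHA hvHm
      by_contra hns
      exact hvavoid H (Finset.mem_filter.2 ⟨hHA, hns⟩) hvHm
    set Av := A.filter (fun H => v ∈ H) with hAvdef
    have hAv' : ∀ H ∈ Av, IsLinearHyperplane H :=
      fun H hH => hA H (Finset.mem_filter.1 hH).1
    have hinter : interSet Av = interSet B := by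
      apply Set.Subset.antisymm
      · intro z hz
        apply Set.mem_iInter₂.2
        intro H hH
        have hvmem : v ∈ H := Set.biInter_subset_of_mem hH hvL
        exact Set.mem_iInter₂.1 hz H (Finset.mem_filter.2 ⟨hBsub hH, hvmem⟩)
      · intro z hz
        apply Set.mem_iInter₂.2
        intro H hH
        obtain ⟨hHA, hvmem⟩ := Finset.mem_filter.1 hH
        exact hvH H hHA hvmem hz
    have hMeq : Msub Av = Msub B := by
      apply SetLike.coe_injective
      rw [coe_Msub Av hAv', coe_Msub B hB, hinter]
    have hxspan : x ∈ Submodule.span ℝ (nrm '' (Av : Set (Set (E d)))) := by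
      rw [← Msub_orth Av, hMeq]
      rw [span_interSet B hB] at hxperp
      exact hxperp
    obtain ⟨w, hwAv, hwcell⟩ := covering Av hAv' x hxspan
    have hev : ∀ᶠ t in nhdsWithin (0:ℝ) (Set.Ioi 0),
        (∀ H ∈ A, v ∉ H → 0 < ⟪nrm H, v⟫ * ⟪nrm H, v + t • w⟫) ∧ 0 < t := by
      refine Filter.Eventually.and ?_ eventually_mem_nhdsWithin
      rw [Finset.eventually_all]
      intro H hH
      by_cases hvmem : v ∈ H
      · exact Filter.Eventually.of_forall fun t hc => absurd hvmem hc
      · have hne : ⟪nrm H, v⟫ ≠ 0 := fun h0 => hvmem ((mem_iff_nrm (hA H hH) v).2 h0)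
        have hpos : 0 < ⟪nrm H, v⟫ * ⟪nrm H, v⟫ := mul_self_pos.2 hne
        have hcont : Filter.Tendsto (fun t : ℝ => ⟪nrm H, v⟫ * ⟪nrm H, v + t • w⟫)
            (nhdsWithin (0:ℝ) (Set.Ioi 0)) (nhds (⟪nrm H, v⟫ * ⟪nrm H, v⟫)) := by
          have hc : Continuous fun t : ℝ => ⟪nrm H, v⟫ * ⟪nrm H, v + t • w⟫ :=
            continuous_const.mul (Continuous.inner continuous_const
              (continuous_const.add (continuous_id.smul continuous_const)))
          have := hc.tendsto 0
          simp only [zero_smul, add_zero] at this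
          exact this.mono_left nhdsWithin_le_nhds
        filter_upwards [hcont.eventually (eventually_gt_nhds hpos)] with t ht
        exact fun _ => ht
    obtain ⟨t₀, ht₀all, ht₀pos⟩ := hev.exists
    set y₁ := v + t₀ • w with hy₁def
    have hy₁Av : ∀ H ∈ Av, ⟪nrm H, y₁⟫ = t₀ * ⟪nrm H, w⟫ := by
      intro H hH
      have hvmem : v ∈ H := (Finset.mem_filter.1 hH).2
      have hzero : ⟪nrm H, v⟫ = 0 := (mem_iff_nrm (hAv' H hH) v).1 hvmem
      rw [hy₁def, inner_add_right, hzero, real_inner_smul_right, zero_add]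
    have hy₁not : y₁ ∉ ⋃ H ∈ A, H := by
      intro hmem
      simp only [Set.mem_iUnion] at hmem
      obtain ⟨H, hH, hyH⟩ := hmem
      have h0 : ⟪nrm H, y₁⟫ = 0 := (mem_iff_nrm (hA H hH) y₁).1 hyH
      by_cases hvmem : v ∈ H
      · have hHAv : H ∈ Av := Finset.mem_filter.2 ⟨hH, hvmem⟩
        have hw0 : ⟪nrm H, w⟫ ≠ 0 := by
          intro hww
          exact hwAv (Set.mem_biUnion hHAv ((mem_iff_nrm (hAv' H hHAv) w).2 hww))
        have := hy₁Av H hHAv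
        rw [h0] at this
        rcases mul_eq_zero.1 this.symm with h | h
        · exact (ne_of_gt ht₀pos) h
        · exact hw0 h
      · have := ht₀all H hH hvmem
        rw [h0, mul_zero] at this
        exact lt_irrefl _ this
    have hcham : IsChamber A (cCell A y₁) := (isChamber_iff hA _).2 ⟨y₁, hy₁not, rfl⟩
    have hvC : v ∈ cCell A y₁ := by
      intro H hH
      by_cases hvmem : v ∈ H
      · have hzero : ⟪nrm H, v⟫ = 0 := (mem_iff_nrm (hA H hH) v).1 hvmem
        rw [hzero, mul_zero]
      · have := ht₀all H hH hvmem
        rw [mul_comm]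
        exact this.le
    have hsub : cCell A y₁ ⊆ cCell Av w := by
      intro z hz H hH
      have h1 := hz H (Finset.mem_filter.1 hH).1
      rw [hy₁Av H hH] at h1
      by_contra hneg
      push_neg at hneg
      have : t₀ * ⟪nrm H, w⟫ * ⟪nrm H, z⟫ < 0 := by
        rw [mul_assoc]
        exact mul_neg_of_pos_of_neg ht₀pos hneg
      linarith
    have hxpolar : x ∈ polarCone (cCell A y₁) := fun z hz => hwcell z (hsub hz)
    have hxv : ⟪x, v⟫ = 0 := by
      have hvspan : v ∈ Submodule.span ℝ (interSet B) := Submodule.subset_span hvL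
      have h := (Submodule.mem_orthogonal _ x).1 hxperp v hvspan
      rw [real_inner_comm] at h
      exact h
    exact ⟨cCell A y₁, hcham, mem_frontier_polar hxpolar hvC hv0 hxv⟩
  · -- RHS ⊆ LHS
    rintro x ⟨P, hP, hxf⟩
    obtain ⟨y₀, hy₀, rfl⟩ := (isChamber_iff hA P).1 hP
    have hcone : ∀ z ∈ cCell A y₀, ∀ t : ℝ, 0 ≤ t → t • z ∈ cCell A y₀ :=
      fun z hz t ht => smul_mem_cCell hz ht
    obtain ⟨hxpolar, y, hyC, hy0, hxy⟩ :=
      frontier_polar_subset (isClosed_cCell A y₀) hcone hxf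
    set B := A.filter (fun H => y ∈ H) with hBdef
    refine ⟨B, Finset.mem_powerset.2 (Finset.filter_subset _ _), ?_, ?_⟩
    · intro heq
      have hyB : y ∈ interSet B :=
        Set.mem_iInter₂.2 fun H hH => (Finset.mem_filter.1 hH).2
      rw [heq] at hyB
      exact hy0 hyB
    · rw [Submodule.mem_orthogonal]
      intro u hu
      induction hu using Submodule.span_induction with
      | mem q hq =>
        have key : ⟪x, q⟫ = 0 := by
          have hqall : ∀ H ∈ B, ⟪nrm H, q⟫ = 0 := by
            intro H hH
            exact (mem_iff_nrm (hA H (Finset.mem_filter.1 hH).1) q).1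
              (Set.mem_iInter₂.1 hq H hH)
          have hev : ∀ᶠ t in nhdsWithin (0:ℝ) (Set.Ioi 0),
              (∀ H ∈ A, 0 ≤ ⟪nrm H, y₀⟫ * ⟪nrm H, y + t • q⟫ ∧
                0 ≤ ⟪nrm H, y₀⟫ * ⟪nrm H, y - t • q⟫) ∧ 0 < t := by
            refine Filter.Eventually.and ?_ eventually_mem_nhdsWithin
            rw [Finset.eventually_all]
            intro H hH
            by_cases hymem : y ∈ H
            · have hHB : H ∈ B := Finset.mem_filter.2 ⟨hH, hymem⟩
              have hy' : ⟪nrm H, y⟫ = 0 := (mem_iff_nrm (hA H hH) y).1 hymem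
              have hq' : ⟪nrm H, q⟫ = 0 := hqall H hHB
              refine Filter.Eventually.of_forall fun t => ?_
              constructor
              · rw [inner_add_right, hy', real_inner_smul_right, hq']
                simp
              · rw [inner_sub_right, hy', real_inner_smul_right, hq']
                simp
            · have hyne : ⟪nrm H, y⟫ ≠ 0 :=
                fun h0 => hymem ((mem_iff_nrm (hA H hH) y).2 h0)
              have hy₀ne : ⟪nrm H, y₀⟫ ≠ 0 := by
                intro h0
                exact hy₀ (Set.mem_biUnion hH ((mem_iff_nrm (hA H hH) y₀).2 h0))
              have hapos : 0 < ⟪nrm H, y₀⟫ * ⟪nrm H, y⟫ :=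
                lt_of_le_of_ne (hyC H hH) (Ne.symm (mul_ne_zero hy₀ne hyne))
              have hcont1 : Filter.Tendsto
                  (fun t : ℝ => ⟪nrm H, y₀⟫ * ⟪nrm H, y + t • q⟫)
                  (nhdsWithin (0:ℝ) (Set.Ioi 0)) (nhds (⟪nrm H, y₀⟫ * ⟪nrm H, y⟫)) := by
                have hc : Continuous fun t : ℝ => ⟪nrm H, y₀⟫ * ⟪nrm H, y + t • q⟫ :=
                  continuous_const.mul (Continuous.inner continuous_const
                    (continuous_const.add (continuous_id.smul continuous_const)))
                have := hc.tendsto 0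
                simp only [zero_smul, add_zero] at this
                exact this.mono_left nhdsWithin_le_nhds
              have hcont2 : Filter.Tendsto
                  (fun t : ℝ => ⟪nrm H, y₀⟫ * ⟪nrm H, y - t • q⟫)
                  (nhdsWithin (0:ℝ) (Set.Ioi 0)) (nhds (⟪nrm H, y₀⟫ * ⟪nrm H, y⟫)) := by
                have hc : Continuous fun t : ℝ => ⟪nrm H, y₀⟫ * ⟪nrm H, y - t • q⟫ :=
                  continuous_const.mul (Continuous.inner continuous_const
                    (continuous_const.sub (continuous_id.smul continuous_const)))
                have := hc.tendsto 0
                simp only [zero_smul, sub_zero] at this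
                exact this.mono_left nhdsWithin_le_nhds
              filter_upwards [hcont1.eventually (eventually_gt_nhds hapos),
                hcont2.eventually (eventually_gt_nhds hapos)] with t h1 h2
              exact ⟨h1.le, h2.le⟩
          obtain ⟨t, htall, htpos⟩ := hev.exists
          have h1 : y + t • q ∈ cCell A y₀ := fun H hH => (htall H hH).1
          have h2 : y - t • q ∈ cCell A y₀ := fun H hH => (htall H hH).2
          have e1 := hxpolar _ h1
          have e2 := hxpolar _ h2
          rw [inner_add_right, hxy, zero_add, real_inner_smul_right] at e1
          rw [inner_sub_right, hxy, zero_sub, real_inner_smul_right] at e2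
          have hge : 0 ≤ t * ⟪x, q⟫ := by linarith
          have hle : t * ⟪x, q⟫ ≤ 0 := e1
          have := le_antisymm hle hge
          rcases mul_eq_zero.1 this with h | h
          · exact absurd h (ne_of_gt htpos)
          · exact h
        rw [real_inner_comm]
        exact key
      | zero => exact inner_zero_left x
      | add a b _ _ ha hb => rw [inner_add_left, ha, hb, add_zero]
      | smul c a _ ha => rw [real_inner_smul_left, ha, mul_zero]
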